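/- Let $\mathcal{M}$ be a compact set of $d \times d$ real matrices and $y \in \mathbb{R}^d$. If $\rho(\mathcal{M}) > 1$ and $y$ does not belong to any proper common invariant subspace of the matrices in $\mathcal{M}$, then $\sup_{n \geq 1} \max_{M_1,\dots,M_n \in \mathcal{M}} \|M_1 \cdots M_n y\| = \infty$. -/

import Mathlib

noncomputable def mnorm {ι : Type*} [Fintype ι] (A : Matrix ι ι ℝ) : ℝ :=
  ⨆ i, ⨆ j, |A i j|

def prodOf {ι : Type*} [Fintype ι] [DecidableEq ι] (S : Set (Matrix ι ι ℝ)) (n : ℕ) :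
    Set (Matrix ι ι ℝ) :=
  {P | ∃ l : List (Matrix ι ι ℝ), l.length = n ∧ (∀ A ∈ l, A ∈ S) ∧ l.prod = P}

noncomputable def jsr {ι : Type*} [Fintype ι] [DecidableEq ι]
    (S : Set (Matrix ι ι ℝ)) : ℝ :=
  Filter.limsup
    (fun n : ℕ => sSup ((fun P => mnorm P ^ (1 / (n:ℝ))) '' prodOf S n))
    Filter.atTop

lemma mnorm_nonneg {ι : Type*} [Fintype ι] (A : Matrix ι ι ℝ) : 0 ≤ mnorm A :=
  Real.iSup_nonneg fun _ => Real.iSup_nonneg fun _ => abs_nonneg _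

lemma prod_mem_prodOf {ι : Type*} [Fintype ι] [DecidableEq ι] {S : Set (Matrix ι ι ℝ)}
    {m n : ℕ} {P Q : Matrix ι ι ℝ} (hP : P ∈ prodOf S m) (hQ : Q ∈ prodOf S n) :
    P * Q ∈ prodOf S (m + n) := by
  obtain ⟨l, hl, hlS, hlp⟩ := hP
  obtain ⟨l', hl', hlS', hlp'⟩ := hQ
  exact ⟨l ++ l', by simp [hl, hl'], by
    intro A hA; rcases List.mem_append.1 hA with h | h
    exacts [hlS A h, hlS' A h], by simp [hlp, hlp']⟩

theorem stmt4 (d : ℕ) (S : Set (Matrix (Fin d) (Fin d) ℝ)) (hcpt : IsCompact S)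
    (hρ : 1 < jsr S) (y : Fin d → ℝ)
    (hinv : ∀ V : Submodule ℝ (Fin d → ℝ), V ≠ ⊤ →
      (∀ A ∈ S, ∀ x ∈ V, A.mulVec x ∈ V) → y ∉ V) :
    ∀ C : ℝ, ∃ n : ℕ, 1 ≤ n ∧ ∃ P ∈ prodOf S n, C < ‖P.mulVec y‖ := by
  by_contra h
  push_neg at h
  obtain ⟨C₀, hC₀⟩ := h
  set C : ℝ := max C₀ 0 with hCdef
  have hC0 : (0:ℝ) ≤ C := le_max_right _ _
  have hC : ∀ n : ℕ, 1 ≤ n → ∀ P ∈ prodOf S n, ‖P.mulVec y‖ ≤ C := by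
    intro n hn P hP
    exact le_trans (hC₀ n hn P hP) (le_max_left _ _)
  -- the orbit set
  set G : Set (Fin d → ℝ) := {v | ∃ n P, P ∈ prodOf S n ∧ P.mulVec y = v} with hGdef
  have hyG : y ∈ G := ⟨0, 1, ⟨[], rfl, by simp, rfl⟩, Matrix.one_mulVec y⟩
  -- span of orbit is invariant, hence top
  set W : Submodule ℝ (Fin d → ℝ) := Submodule.span ℝ G with hWdef
  have hWinv : ∀ A ∈ S, ∀ x ∈ W, A.mulVec x ∈ W := by
    intro A hA x hx
    have : W.map A.mulVecLin ≤ W := by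
      rw [hWdef, Submodule.map_span, Submodule.span_le]
      rintro _ ⟨v, ⟨n, P, hP, rfl⟩, rfl⟩
      have hmem : A * P ∈ prodOf S (n + 1) := by
        obtain ⟨l, hl, hlS, hlp⟩ := hP
        refine ⟨A :: l, by simp [hl], ?_, by simp [hlp]⟩
        intro B hB
        rcases List.mem_cons.1 hB with h | h
        · exact h ▸ hA
        · exact hlS B h
      have heq : A.mulVecLin (P.mulVec y) = (A * P).mulVec y := by
        simp [Matrix.mulVecLin_apply, Matrix.mulVec_mulVec]
      exact Submodule.subset_span ⟨n + 1, A * P, hmem, heq.symm⟩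
    exact this ⟨x, hx, rfl⟩
  have hWtop : W = ⊤ := by
    by_contra hW
    exact hinv W hW hWinv (Submodule.subset_span hyG)
  -- orbit vectors are uniformly contracted by products
  have hGbdd : ∀ v ∈ G, ∀ m : ℕ, 1 ≤ m → ∀ Q ∈ prodOf S m, ‖Q.mulVec v‖ ≤ C := by
    rintro v ⟨n, P, hP, rfl⟩ m hm Q hQ
    have hmem := prod_mem_prodOf hQ hP
    have := hC (m + n) (le_trans hm (Nat.le_add_right m n)) (Q * P) hmem
    simpa [Matrix.mulVec_mulVec] using this
  -- extract a finite spanning subset of G (a basis)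
  obtain ⟨b, hbG, hbspan, hbli⟩ := exists_linearIndependent ℝ G
  have hbfin : b.Finite := hbli.setFinite
  have hbtop : Submodule.span ℝ b = ⊤ := by rw [hbspan]; exact hWtop
  haveI : Fintype b := hbfin.fintype
  let B : Module.Basis b ℝ (Fin d → ℝ) := Module.Basis.mk hbli (by rw [Subtype.range_coe, hbtop])
  -- coordinate functionals are bounded
  have hcoord : ∀ i : b, ∃ c : ℝ, 0 ≤ c ∧ ∀ x, |B.repr x i| ≤ c * ‖x‖ := by
    intro i
    let L : (Fin d → ℝ) →L[ℝ] ℝ := LinearMap.toContinuousLinearMap (B.coord i)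
    refine ⟨‖L‖, norm_nonneg _, fun x => ?_⟩
    have := L.le_opNorm x
    simpa [L, Real.norm_eq_abs, Module.Basis.coord] using this
  choose c hc0 hcb using hcoord
  set K1 : ℝ := (∑ i : b, c i) * C with hK1def
  have hK10 : 0 ≤ K1 := mul_nonneg (Finset.sum_nonneg fun i _ => hc0 i) hC0
  -- every product of length ≥ 1 has operator norm ≤ K1
  have hop : ∀ m : ℕ, 1 ≤ m → ∀ Q ∈ prodOf S m, ∀ x, ‖Q.mulVec x‖ ≤ K1 * ‖x‖ := by
    intro m hm Q hQ x
    have hBiG : ∀ i : b, B i ∈ G := by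
      intro i
      rw [Module.Basis.mk_apply]
      exact hbG i.2
    have hxsum : x = ∑ i : b, B.repr x i • B i := (B.sum_repr x).symm
    have : Q.mulVec x = ∑ i : b, B.repr x i • Q.mulVec (B i) := by
      conv_lhs => rw [hxsum]
      rw [show ∀ v, Q.mulVec v = Q.mulVecLin v from fun _ => rfl]
      rw [map_sum]
      simp
    rw [this]
    calc ‖∑ i : b, B.repr x i • Q.mulVec (B i)‖
        ≤ ∑ i : b, ‖B.repr x i • Q.mulVec (B i)‖ := norm_sum_le _ _
      _ ≤ ∑ i : b, (c i * ‖x‖) * C := by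
          refine Finset.sum_le_sum fun i _ => ?_
          rw [norm_smul, Real.norm_eq_abs]
          exact mul_le_mul (hcb i x) (hGbdd (B i) (hBiG i) m hm Q hQ) (norm_nonneg _)
            (mul_nonneg (hc0 i) (norm_nonneg _))
      _ = K1 * ‖x‖ := by rw [hK1def]; ring_nf; rw [← Finset.sum_mul, ← Finset.sum_mul]; ring
  -- hence mnorm of every product is ≤ K
  set K : ℝ := max 1 K1 with hKdef
  have hK1 : (1:ℝ) ≤ K := le_max_left _ _
  have hK0 : (0:ℝ) ≤ K := le_trans zero_le_one hK1
  have hmn : ∀ m : ℕ, 1 ≤ m → ∀ Q ∈ prodOf S m, mnorm Q ≤ K := by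
    intro m hm Q hQ
    refine Real.iSup_le (fun i => Real.iSup_le (fun j => ?_) hK0) hK0
    have h1 : |Q i j| ≤ ‖Q.mulVec (Pi.single j 1)‖ := by
      have := norm_le_pi_norm (Q.mulVec (Pi.single j 1)) i
      simpa [Real.norm_eq_abs, Matrix.mulVec_single] using this
    have h2 : ‖(Pi.single j 1 : Fin d → ℝ)‖ = 1 := by
      rw [Pi.norm_single]; simp
    have := hop m hm Q hQ (Pi.single j 1)
    rw [h2, mul_one] at this
    exact le_trans (le_trans h1 this) (le_max_right _ _)
  -- conclude jsr S ≤ 1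
  have hu_le : ∀ᶠ n : ℕ in Filter.atTop,
      sSup ((fun P => mnorm P ^ (1 / (n:ℝ))) '' prodOf S n) ≤ K ^ (1 / (n:ℝ)) := by
    filter_upwards [Filter.eventually_ge_atTop 1] with n hn
    refine Real.sSup_le ?_ (Real.rpow_nonneg hK0 _)
    rintro _ ⟨P, hP, rfl⟩
    exact Real.rpow_le_rpow (mnorm_nonneg P) (hmn n hn P hP) (by positivity)
  have hvtend : Filter.Tendsto (fun n : ℕ => K ^ (1 / (n:ℝ))) Filter.atTop (nhds 1) := by
    have h0 : Filter.Tendsto (fun n : ℕ => 1 / (n:ℝ)) Filter.atTop (nhds 0) :=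
      tendsto_one_div_atTop_nhds_zero_nat
    have hK : K ≠ 0 := by linarith
    have := (Real.continuousAt_const_rpow (b := (0:ℝ)) hK).tendsto.comp h0
    simpa [Real.rpow_zero, Function.comp_def] using this
  have hjsr : jsr S ≤ 1 := by
    have h1 : Filter.limsup (fun n : ℕ => K ^ (1 / (n:ℝ))) Filter.atTop = 1 :=
      hvtend.limsup_eq
    have h2 : jsr S ≤ Filter.limsup (fun n : ℕ => K ^ (1 / (n:ℝ))) Filter.atTop := by
      refine Filter.limsup_le_limsup hu_le ?_ hvtend.isBoundedUnder_le
      refine Filter.isCoboundedUnder_le_of_le Filter.atTop (x := 0) fun n => ?_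
      exact Real.sSup_nonneg
        (by rintro _ ⟨P, hP, rfl⟩; exact Real.rpow_nonneg (mnorm_nonneg P) _)
    exact h2.trans h1.le
  linarith
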